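/- For every integer q ≥ 3, the XOR gadget of order q has exactly two subtours: the odd subtour, which is a Hamiltonian path between the two portals of the 1-side, and the even subtour, which is a Hamiltonian path between the two portals of the 2-side; moreover the symmetric difference of the two subtours consists of exactly 2q − 2 edges. -/

import Mathlib

set_option maxHeartbeats 1600000


/-!
STATEMENT 7: For every integer q ≥ 3, the XOR gadget of order q has exactly two
subtours: the odd subtour, a Hamiltonian path between the two portals of the 1-side,
and the even subtour, a Hamiltonian path between the two portals of the 2-side;
moreover the symmetric difference of the two subtours has exactly 2q − 2 edges.
-/

noncomputable def sdeg {V : Type*} (ζ : SimpleGraph V) (v : V) : ℕ :=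
  (ζ.neighborSet v).ncard

/-- Vertices of the XOR gadget of order q: (i, 0) = aᵢ, (i, 1) = bᵢ, (i, 2) = the
middle vertex of the 2-path joining aᵢ and bᵢ. -/
abbrev XorV (q : ℕ) := Fin q × Fin 3

/-- adjacency (up to symmetrization): the paths (a₁,…,a_q) and (b₁,…,b_q), and for
each i the 2-path aᵢ–mᵢ–bᵢ -/
def xorAdj (q : ℕ) : XorV q → XorV q → Prop := fun x y =>
  (x.2.val = 0 ∧ y.2.val = 0 ∧ y.1.val = x.1.val + 1) ∨
  (x.2.val = 1 ∧ y.2.val = 1 ∧ y.1.val = x.1.val + 1) ∨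
  (x.2.val = 0 ∧ y.2.val = 2 ∧ x.1 = y.1) ∨
  (x.2.val = 2 ∧ y.2.val = 1 ∧ x.1 = y.1)

/-- the XOR gadget of order q -/
def XorG (q : ℕ) : SimpleGraph (XorV q) := SimpleGraph.fromRel (xorAdj q)

/-- the PV-portals: a₁, b₁, a_q, b_q -/
def xorPortal (q : ℕ) (v : XorV q) : Prop :=
  (v.1.val = 0 ∨ v.1.val = q - 1) ∧ v.2.val ≠ 2

/-- ζ is a subtour of the XOR gadget: a spanning collection of vertex-disjoint
paths (max degree two, acyclic) in which every non-portal vertex has degree two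
(only portals may be endpoints of the paths) -/
def IsXorSubtour (q : ℕ) (ζ : SimpleGraph (XorV q)) : Prop :=
  ζ ≤ XorG q ∧ ζ.IsAcyclic ∧ (∀ v, sdeg ζ v ≤ 2) ∧
    (∀ v, ¬ xorPortal q v → sdeg ζ v = 2)

/-- ζ is a Hamiltonian path of the gadget with endpoints u and w -/
def IsHamPathBetween (q : ℕ) (ζ : SimpleGraph (XorV q)) (u w : XorV q) : Prop :=
  u ≠ w ∧ sdeg ζ u = 1 ∧ sdeg ζ w = 1 ∧
    (∀ v, v ≠ u → v ≠ w → sdeg ζ v = 2) ∧ ζ.Connected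

/-! ### Auxiliary development -/

namespace XorPf

open SimpleGraph

/-! #### The infinite path on ℕ and acyclicity via height functions -/

/-- The path graph on ℕ. -/
def natPath : SimpleGraph ℕ := SimpleGraph.fromRel fun a b => b = a + 1

lemma natPath_adj {a b : ℕ} : natPath.Adj a b ↔ a ≠ b ∧ (b = a + 1 ∨ a = b + 1) :=
  SimpleGraph.fromRel_adj _ _ _

lemma natPath_count (k : ℕ) : ∀ {a b : ℕ} (w : natPath.Walk a b),
    (Even (w.edges.count s(k, k + 1)) ↔ ((a ≤ k) ↔ (b ≤ k))) := by
  intro a b w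
  induction w with
  | nil => simp
  | @cons u v b h p ih =>
    rw [SimpleGraph.Walk.edges_cons, List.count_cons]
    have hadj := natPath_adj.1 h
    by_cases hc : s(u, v) = s(k, k + 1)
    · have hb : (s(u, v) == s(k, k + 1)) = true := beq_iff_eq.mpr hc
      rw [Sym2.eq_iff] at hc
      simp [hb]
      rw [Nat.even_add_one, ih]
      omega
    · have hb : (s(u, v) == s(k, k + 1)) = false := beq_eq_false_iff_ne.mpr hc
      rw [Sym2.eq_iff] at hc
      simp [hb]
      rw [ih]
      omega

lemma natPath_isAcyclic : natPath.IsAcyclic := by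
  intro v c hc
  have h3 := hc.three_le_length
  have htrail : c.IsTrail := ((SimpleGraph.Walk.isCycle_def _).1 hc).1
  cases c with
  | nil => simp at h3
  | @cons _ u _ h p =>
    have hmem : s(v, u) ∈ (SimpleGraph.Walk.cons h p).edges := by
      rw [SimpleGraph.Walk.edges_cons]; exact List.mem_cons_self
    have hcount : ((SimpleGraph.Walk.cons h p).edges.count s(v, u)) = 1 :=
      List.count_eq_one_of_mem htrail.edges_nodup hmem
    have hadj := natPath_adj.1 h
    rcases hadj.2 with h1 | h1
    · -- u = v + 1, edge is s(v, v+1)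
      have := (natPath_count v (SimpleGraph.Walk.cons h p)).2 (by omega)
      rw [Nat.even_iff] at this
      have hswap : s(v, u) = s(v, v + 1) := by rw [Sym2.eq_iff]; left; exact ⟨rfl, h1⟩
      rw [hswap] at hcount
      omega
    · -- v = u + 1, edge is s(u+1, u) = s(u, u+1)
      have := (natPath_count u (SimpleGraph.Walk.cons h p)).2 (by omega)
      rw [Nat.even_iff] at this
      have hswap : s(v, u) = s(u, u + 1) := by rw [Sym2.eq_iff]; right; exact ⟨h1, rfl⟩
      rw [hswap] at hcount
      omega

/-- If a graph has an injective height function along which every edge is a unit step,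
it is acyclic. -/
lemma acyclic_of_height {V : Type*} (G : SimpleGraph V) (f : V → ℕ)
    (hinj : Function.Injective f)
    (hadj : ∀ {x y}, G.Adj x y → f y = f x + 1 ∨ f x = f y + 1) : G.IsAcyclic := by
  intro v c hc
  let hom : G →g natPath :=
    ⟨f, by
      intro a b hab
      rw [natPath_adj]
      exact ⟨fun he => G.ne_of_adj hab (hinj he), hadj hab⟩⟩
  exact natPath_isAcyclic (c.map hom) (hc.map (f := hom) hinj)

/-! #### The two candidate subtours -/

/-- The symmetrized edge relation of the subtour with parameter `p` (`p = 0`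
gives the even subtour, `p = 1` the odd subtour): all rungs, the a-edge at slot
`i` iff `i % 2 = p`, and the b-edge at slot `i` iff `i % 2 ≠ p`. -/
def zsym (q p : ℕ) (x y : XorV q) : Prop :=
  (x.1.val = y.1.val ∧
    ((x.2.val = 0 ∧ y.2.val = 2) ∨ (x.2.val = 2 ∧ y.2.val = 0) ∨
     (x.2.val = 2 ∧ y.2.val = 1) ∨ (x.2.val = 1 ∧ y.2.val = 2))) ∨
  (x.2.val = 0 ∧ y.2.val = 0 ∧
    ((y.1.val = x.1.val + 1 ∧ x.1.val % 2 = p) ∨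
     (x.1.val = y.1.val + 1 ∧ y.1.val % 2 = p))) ∨
  (x.2.val = 1 ∧ y.2.val = 1 ∧
    ((y.1.val = x.1.val + 1 ∧ ¬ x.1.val % 2 = p) ∨
     (x.1.val = y.1.val + 1 ∧ ¬ y.1.val % 2 = p)))

def zeta (q p : ℕ) : SimpleGraph (XorV q) where
  Adj x y := zsym q p x y
  symm := by
    constructor
    intro x y h
    unfold zsym at *
    omega
  loopless := by
    constructor
    intro x h
    unfold zsym at h
    omega

lemma zeta_adj' {q p : ℕ} {x y : XorV q} : (zeta q p).Adj x y ↔ zsym q p x y := Iff.rfl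

lemma xorG_adj {q : ℕ} {x y : XorV q} :
    (XorG q).Adj x y ↔ x ≠ y ∧ (xorAdj q x y ∨ xorAdj q y x) :=
  SimpleGraph.fromRel_adj _ _ _

/-! #### Neighborhoods in `zeta q p` -/

section nbhd

variable {q p : ℕ}

lemma nbhd_m {i : ℕ} (hi : i < q) :
    (zeta q p).neighborSet (⟨i, hi⟩, ⟨2, by omega⟩) =
      {(⟨i, hi⟩, ⟨0, by omega⟩), (⟨i, hi⟩, ⟨1, by omega⟩)} := by
  ext y
  have h1 := y.1.isLt
  have h2 := y.2.isLt
  simp [zeta_adj', zsym, Prod.ext_iff, Fin.ext_iff, -Fin.val_eq_zero_iff]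
  omega

lemma nbhd_a_succ {i : ℕ} (hp : p < 2) (hpar : i % 2 = p) (hi : i < q) (hi1 : i + 1 < q) :
    (zeta q p).neighborSet (⟨i, hi⟩, ⟨0, by omega⟩) =
      {(⟨i, hi⟩, ⟨2, by omega⟩), (⟨i + 1, hi1⟩, ⟨0, by omega⟩)} := by
  ext y
  have h1 := y.1.isLt
  have h2 := y.2.isLt
  simp [zeta_adj', zsym, Prod.ext_iff, Fin.ext_iff, -Fin.val_eq_zero_iff]
  omega

lemma nbhd_a_pred {i : ℕ} (hp : p < 2) (hpar : i % 2 ≠ p) (h0 : 0 < i) (hi : i < q) :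
    (zeta q p).neighborSet (⟨i, hi⟩, ⟨0, by omega⟩) =
      {(⟨i, hi⟩, ⟨2, by omega⟩), (⟨i - 1, by omega⟩, ⟨0, by omega⟩)} := by
  ext y
  have h1 := y.1.isLt
  have h2 := y.2.isLt
  simp [zeta_adj', zsym, Prod.ext_iff, Fin.ext_iff, -Fin.val_eq_zero_iff]
  omega

lemma nbhd_a_start {i : ℕ} (hp : p < 2) (hpar : i % 2 ≠ p) (h0 : i = 0) (hi : i < q) :
    (zeta q p).neighborSet (⟨i, hi⟩, ⟨0, by omega⟩) = {(⟨i, hi⟩, ⟨2, by omega⟩)} := by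
  ext y
  have h1 := y.1.isLt
  have h2 := y.2.isLt
  simp [zeta_adj', zsym, Prod.ext_iff, Fin.ext_iff, -Fin.val_eq_zero_iff]
  omega

lemma nbhd_a_end {i : ℕ} (hp : p < 2) (hpar : i % 2 = p) (h1 : i + 1 = q) (hi : i < q) :
    (zeta q p).neighborSet (⟨i, hi⟩, ⟨0, by omega⟩) = {(⟨i, hi⟩, ⟨2, by omega⟩)} := by
  ext y
  have h1' := y.1.isLt
  have h2 := y.2.isLt
  simp [zeta_adj', zsym, Prod.ext_iff, Fin.ext_iff, -Fin.val_eq_zero_iff]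
  omega

lemma nbhd_b_succ {i : ℕ} (hp : p < 2) (hpar : i % 2 ≠ p) (hi : i < q) (hi1 : i + 1 < q) :
    (zeta q p).neighborSet (⟨i, hi⟩, ⟨1, by omega⟩) =
      {(⟨i, hi⟩, ⟨2, by omega⟩), (⟨i + 1, hi1⟩, ⟨1, by omega⟩)} := by
  ext y
  have h1 := y.1.isLt
  have h2 := y.2.isLt
  simp [zeta_adj', zsym, Prod.ext_iff, Fin.ext_iff, -Fin.val_eq_zero_iff]
  omega

lemma nbhd_b_pred {i : ℕ} (hp : p < 2) (hpar : i % 2 = p) (h0 : 0 < i) (hi : i < q) :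
    (zeta q p).neighborSet (⟨i, hi⟩, ⟨1, by omega⟩) =
      {(⟨i, hi⟩, ⟨2, by omega⟩), (⟨i - 1, by omega⟩, ⟨1, by omega⟩)} := by
  ext y
  have h1 := y.1.isLt
  have h2 := y.2.isLt
  simp [zeta_adj', zsym, Prod.ext_iff, Fin.ext_iff, -Fin.val_eq_zero_iff]
  omega

lemma nbhd_b_start {i : ℕ} (hp : p < 2) (hpar : i % 2 = p) (h0 : i = 0) (hi : i < q) :
    (zeta q p).neighborSet (⟨i, hi⟩, ⟨1, by omega⟩) = {(⟨i, hi⟩, ⟨2, by omega⟩)} := by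
  ext y
  have h1 := y.1.isLt
  have h2 := y.2.isLt
  simp [zeta_adj', zsym, Prod.ext_iff, Fin.ext_iff, -Fin.val_eq_zero_iff]
  omega

lemma nbhd_b_end {i : ℕ} (hp : p < 2) (hpar : i % 2 ≠ p) (h1 : i + 1 = q) (hi : i < q) :
    (zeta q p).neighborSet (⟨i, hi⟩, ⟨1, by omega⟩) = {(⟨i, hi⟩, ⟨2, by omega⟩)} := by
  ext y
  have h1' := y.1.isLt
  have h2 := y.2.isLt
  simp [zeta_adj', zsym, Prod.ext_iff, Fin.ext_iff, -Fin.val_eq_zero_iff]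
  omega

lemma pair_ne_1 {i : ℕ} (hi : i < q) {t s : ℕ} (ht : t < 3) (hs : s < 3) (hts : t ≠ s) :
    ((⟨i, hi⟩, ⟨t, ht⟩) : XorV q) ≠ (⟨i, hi⟩, ⟨s, hs⟩) := by
  simp only [Ne, Prod.ext_iff, Fin.ext_iff]
  omega

lemma pair_ne_2 {i j : ℕ} (hi : i < q) (hj : j < q) {t s : ℕ} (ht : t < 3) (hs : s < 3)
    (hij : i ≠ j) : ((⟨i, hi⟩, ⟨t, ht⟩) : XorV q) ≠ (⟨j, hj⟩, ⟨s, hs⟩) := by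
  simp only [Ne, Prod.ext_iff, Fin.ext_iff]
  omega

/-- The degree of every vertex in `zeta q p`: `1` at the two endpoints, `2`
elsewhere. -/
lemma zeta_sdeg (hp : p < 2) (hq : 3 ≤ q) (v : XorV q) :
    sdeg (zeta q p) v =
      if (v.1.val = 0 ∧ v.2.val + p = 1) ∨
         (v.1.val = q - 1 ∧ (((q - 1) % 2 = p ∧ v.2.val = 0) ∨
            ((q - 1) % 2 ≠ p ∧ v.2.val = 1)))
      then 1 else 2 := by
  obtain ⟨⟨i, hi⟩, ⟨t, ht⟩⟩ := v
  dsimp only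
  interval_cases t
  · -- a-vertex
    by_cases hpar : i % 2 = p
    · by_cases hend : i + 1 < q
      · rw [if_neg (by omega)]
        rw [sdeg, nbhd_a_succ hp hpar hi hend]
        exact Set.ncard_pair (pair_ne_2 hi hend (by omega) (by omega) (by omega))
      · have hiq : i + 1 = q := by omega
        rw [if_pos (by omega)]
        rw [sdeg, nbhd_a_end hp hpar hiq hi]
        exact Set.ncard_singleton _
    · by_cases h0 : 0 < i
      · rw [if_neg (by omega)]
        rw [sdeg, nbhd_a_pred hp hpar h0 hi]
        exact Set.ncard_pair (pair_ne_2 hi (by omega) (by omega) (by omega) (by omega))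
      · have hi0 : i = 0 := by omega
        rw [if_pos (by omega)]
        rw [sdeg, nbhd_a_start hp hpar hi0 hi]
        exact Set.ncard_singleton _
  · -- b-vertex
    by_cases hpar : i % 2 = p
    · by_cases h0 : 0 < i
      · rw [if_neg (by omega)]
        rw [sdeg, nbhd_b_pred hp hpar h0 hi]
        exact Set.ncard_pair (pair_ne_2 hi (by omega) (by omega) (by omega) (by omega))
      · have hi0 : i = 0 := by omega
        rw [if_pos (by omega)]
        rw [sdeg, nbhd_b_start hp hpar hi0 hi]
        exact Set.ncard_singleton _
    · by_cases hend : i + 1 < q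
      · rw [if_neg (by omega)]
        rw [sdeg, nbhd_b_succ hp hpar hi hend]
        exact Set.ncard_pair (pair_ne_2 hi hend (by omega) (by omega) (by omega))
      · have hiq : i + 1 = q := by omega
        rw [if_pos (by omega)]
        rw [sdeg, nbhd_b_end hp hpar hiq hi]
        exact Set.ncard_singleton _
  · -- middle vertex
    rw [if_neg (by omega)]
    rw [sdeg, nbhd_m hi]
    exact Set.ncard_pair (pair_ne_1 hi (by omega) (by omega) (by omega))

end nbhd

/-! #### Acyclicity of `zeta q p` -/

section acyclic

variable {q p : ℕ}

/-- The position of a vertex along the Hamiltonian path of `zeta q p`. -/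
def hgt (p : ℕ) (v : XorV q) : ℕ :=
  3 * v.1.val +
    (if v.1.val % 2 = p
      then (if v.2.val = 1 then 0 else if v.2.val = 2 then 1 else 2)
      else (if v.2.val = 0 then 0 else if v.2.val = 2 then 1 else 2))

lemma hgt_inj : Function.Injective (hgt p (q := q)) := by
  intro x y h
  have hx1 := x.1.isLt
  have hx2 := x.2.isLt
  have hy1 := y.1.isLt
  have hy2 := y.2.isLt
  unfold hgt at h
  rw [Prod.ext_iff]
  rw [Fin.ext_iff, Fin.ext_iff]
  split_ifs at h <;> omega

lemma hgt_adj (hp : p < 2) {x y : XorV q} (h : (zeta q p).Adj x y) :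
    hgt p y = hgt p x + 1 ∨ hgt p x = hgt p y + 1 := by
  rw [zeta_adj'] at h
  unfold zsym at h
  unfold hgt
  split_ifs <;> omega

lemma zeta_isAcyclic (hp : p < 2) : (zeta q p).IsAcyclic :=
  acyclic_of_height _ (hgt p) hgt_inj (fun h => hgt_adj hp h)

end acyclic

/-! #### Connectivity of `zeta q p` -/

section conn

variable {q p : ℕ}

lemma adjAM {i : ℕ} (hi : i < q) :
    (zeta q p).Adj (⟨i, hi⟩, ⟨0, by omega⟩) (⟨i, hi⟩, ⟨2, by omega⟩) := by
  rw [zeta_adj']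
  unfold zsym
  dsimp only
  omega

lemma adjMB {i : ℕ} (hi : i < q) :
    (zeta q p).Adj (⟨i, hi⟩, ⟨2, by omega⟩) (⟨i, hi⟩, ⟨1, by omega⟩) := by
  rw [zeta_adj']
  unfold zsym
  dsimp only
  omega

lemma adjAA {i : ℕ} (hpar : i % 2 = p) (hi : i < q) (hi1 : i + 1 < q) :
    (zeta q p).Adj (⟨i, hi⟩, ⟨0, by omega⟩) (⟨i + 1, hi1⟩, ⟨0, by omega⟩) := by
  rw [zeta_adj']
  unfold zsym
  dsimp only
  omega

lemma adjBB {i : ℕ} (hpar : i % 2 ≠ p) (hi : i < q) (hi1 : i + 1 < q) :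
    (zeta q p).Adj (⟨i, hi⟩, ⟨1, by omega⟩) (⟨i + 1, hi1⟩, ⟨1, by omega⟩) := by
  rw [zeta_adj']
  unfold zsym
  dsimp only
  omega

lemma zeta_connected (hq : 3 ≤ q) : (zeta q p).Connected := by
  have h0 : 0 < q := by omega
  have key : ∀ i (hi : i < q),
      (zeta q p).Reachable (⟨0, h0⟩, ⟨2, by omega⟩) (⟨i, hi⟩, ⟨2, by omega⟩) := by
    intro i
    induction i with
    | zero => intro hi; rfl
    | succ n ih =>
      intro hi
      have hn : n < q := by omega
      refine (ih hn).trans ?_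
      by_cases hpar : n % 2 = p
      · exact ((adjAM hn).symm.reachable).trans
          (((adjAA hpar hn hi).reachable).trans ((adjAM hi).reachable))
      · exact ((adjMB hn).reachable).trans
          (((adjBB hpar hn hi).reachable).trans ((adjMB hi).symm.reachable))
  have toAll : ∀ v : XorV q, (zeta q p).Reachable (⟨0, h0⟩, ⟨2, by omega⟩) v := by
    rintro ⟨⟨i, hi⟩, ⟨t, ht⟩⟩
    interval_cases t
    · exact (key i hi).trans ((adjAM hi).symm.reachable)
    · exact (key i hi).trans ((adjMB hi).reachable)
    · exact key i hi
  rw [connected_iff]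
  exact ⟨fun u v => (toAll u).symm.trans (toAll v), ⟨(⟨0, h0⟩, ⟨0, by omega⟩)⟩⟩

end conn

/-! #### `zeta q p` is a subtour -/

section subtour

variable {q p : ℕ}

lemma zeta_le : zeta q p ≤ XorG q := by
  intro x y h
  rw [zeta_adj'] at h
  unfold zsym at h
  rw [xorG_adj]
  refine ⟨?_, ?_⟩
  · simp only [Ne, Prod.ext_iff, Fin.ext_iff]
    omega
  · unfold xorAdj
    simp only [Fin.ext_iff]
    omega

lemma zeta_isXorSubtour (hp : p < 2) (hq : 3 ≤ q) : IsXorSubtour q (zeta q p) := by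
  refine ⟨zeta_le, zeta_isAcyclic hp, ?_, ?_⟩
  · intro v
    rw [zeta_sdeg hp hq]
    split_ifs <;> omega
  · intro v hv
    rw [zeta_sdeg hp hq]
    rw [if_neg]
    intro hcond
    apply hv
    unfold xorPortal
    exact ⟨by omega, by omega⟩

/-- The Hamiltonian-path property of `zeta q p`, with flexible endpoint data. -/
lemma hampath_zeta (hp : p < 2) (hq : 3 ≤ q) {e2 : ℕ} (he2 : e2 < 3)
    (hcond : ((q - 1) % 2 = p ∧ e2 = 0) ∨ ((q - 1) % 2 ≠ p ∧ e2 = 1)) :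
    IsHamPathBetween q (zeta q p) (⟨0, by omega⟩, ⟨1 - p, by omega⟩)
      (⟨q - 1, by omega⟩, ⟨e2, he2⟩) := by
  refine ⟨?_, ?_, ?_, ?_, zeta_connected hq⟩
  · exact pair_ne_2 (by omega) (by omega) (by omega) he2 (by omega)
  · rw [zeta_sdeg hp hq, if_pos (Or.inl ⟨rfl, show (1 - p) + p = 1 by omega⟩)]
  · rw [zeta_sdeg hp hq, if_pos (Or.inr ⟨rfl, hcond⟩)]
  · rintro ⟨⟨i, hi⟩, ⟨t, ht⟩⟩ hvu hvw
    have hvu' : ¬(i = 0 ∧ t = 1 - p) := by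
      rintro ⟨rfl, rfl⟩
      exact hvu rfl
    have hvw' : ¬(i = q - 1 ∧ t = e2) := by
      rintro ⟨rfl, rfl⟩
      exact hvw rfl
    rw [zeta_sdeg hp hq, if_neg (by try dsimp only
                                    omega)]

end subtour

/-! #### Uniqueness: every subtour equals `zeta q 0` or `zeta q 1` -/

section unique

variable {q : ℕ} {ζ : SimpleGraph (XorV q)}

lemma Gnbhd_m {i : ℕ} (hi : i < q) :
    (XorG q).neighborSet (⟨i, hi⟩, ⟨2, by omega⟩) =
      {(⟨i, hi⟩, ⟨0, by omega⟩), (⟨i, hi⟩, ⟨1, by omega⟩)} := by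
  ext y
  have h1 := y.1.isLt
  have h2 := y.2.isLt
  simp [xorG_adj, xorAdj, Prod.ext_iff, Fin.ext_iff, -Fin.val_eq_zero_iff]
  omega

lemma Gnbhd_a {i : ℕ} (h0 : 0 < i) (hi1 : i + 1 < q) (hi : i < q) :
    (XorG q).neighborSet (⟨i, hi⟩, ⟨0, by omega⟩) =
      {(⟨i, hi⟩, ⟨2, by omega⟩), (⟨i + 1, hi1⟩, ⟨0, by omega⟩),
        (⟨i - 1, by omega⟩, ⟨0, by omega⟩)} := by
  ext y
  have h1 := y.1.isLt
  have h2 := y.2.isLt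
  simp [xorG_adj, xorAdj, Prod.ext_iff, Fin.ext_iff, -Fin.val_eq_zero_iff]
  omega

lemma Gnbhd_b {i : ℕ} (h0 : 0 < i) (hi1 : i + 1 < q) (hi : i < q) :
    (XorG q).neighborSet (⟨i, hi⟩, ⟨1, by omega⟩) =
      {(⟨i, hi⟩, ⟨2, by omega⟩), (⟨i + 1, hi1⟩, ⟨1, by omega⟩),
        (⟨i - 1, by omega⟩, ⟨1, by omega⟩)} := by
  ext y
  have h1 := y.1.isLt
  have h2 := y.2.isLt
  simp [xorG_adj, xorAdj, Prod.ext_iff, Fin.ext_iff, -Fin.val_eq_zero_iff]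
  omega

/-- Every subtour contains all the rung edges. -/
lemma sub_rung (hζ : IsXorSubtour q ζ) {i : ℕ} (hi : i < q) :
    ζ.Adj (⟨i, hi⟩, ⟨2, by omega⟩) (⟨i, hi⟩, ⟨0, by omega⟩) ∧
      ζ.Adj (⟨i, hi⟩, ⟨2, by omega⟩) (⟨i, hi⟩, ⟨1, by omega⟩) := by
  obtain ⟨hle, _, _, hdeg⟩ := hζ
  have hnp : ¬ xorPortal q ((⟨i, hi⟩, ⟨2, by omega⟩) : XorV q) := by
    unfold xorPortal
    dsimp only
    omega
  have hcard : sdeg ζ (⟨i, hi⟩, ⟨2, by omega⟩) = 2 := hdeg _ hnp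
  have hsub : ζ.neighborSet (⟨i, hi⟩, ⟨2, by omega⟩) ⊆
      (XorG q).neighborSet (⟨i, hi⟩, ⟨2, by omega⟩) := fun y hy => hle hy
  rw [Gnbhd_m hi] at hsub
  have hne : ((⟨i, hi⟩, ⟨0, by omega⟩) : XorV q) ≠ (⟨i, hi⟩, ⟨1, by omega⟩) :=
    pair_ne_1 hi (by omega) (by omega) (by omega)
  have heq : ζ.neighborSet (⟨i, hi⟩, ⟨2, by omega⟩) =
      {(⟨i, hi⟩, ⟨0, by omega⟩), (⟨i, hi⟩, ⟨1, by omega⟩)} := by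
    apply Set.eq_of_subset_of_ncard_le hsub
    rw [Set.ncard_pair hne]
    rw [sdeg] at hcard
    omega
  constructor
  · have : ((⟨i, hi⟩, ⟨0, by omega⟩) : XorV q) ∈
        ζ.neighborSet (⟨i, hi⟩, ⟨2, by omega⟩) := by
      rw [heq]; exact Set.mem_insert _ _
    exact this
  · have : ((⟨i, hi⟩, ⟨1, by omega⟩) : XorV q) ∈
        ζ.neighborSet (⟨i, hi⟩, ⟨2, by omega⟩) := by
      rw [heq]; exact Set.mem_insert_of_mem _ rfl
    exact this

/-- In a 2-element subset of a 3-element set containing `a`, membership of `b` and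
`c` are complementary. -/
lemma mem_xor_of_ncard_two {α : Type*} {s : Set α} {a b c : α} (hs : s ⊆ {a, b, c})
    (ha : a ∈ s) (hcard : s.ncard = 2) (hab : a ≠ b) (hac : a ≠ c) (hbc : b ≠ c) :
    (b ∈ s ↔ c ∉ s) := by
  have hfin : s.Finite := Set.Finite.subset (Set.toFinite {a, b, c}) hs
  constructor
  · intro hb hc
    have h3 : ({a, b, c} : Set α) ⊆ s := by
      intro x hx
      rcases hx with rfl | rfl | rfl
      exacts [ha, hb, hc]
    have : ({a, b, c} : Set α).ncard ≤ s.ncard := Set.ncard_le_ncard h3 hfin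
    rw [Set.ncard_insert_of_notMem (by simp [hab, hac]) (Set.toFinite _),
      Set.ncard_pair hbc] at this
    omega
  · intro hc
    by_contra hb
    have h1 : s ⊆ {a} := by
      intro x hx
      rcases hs hx with rfl | rfl | rfl
      · rfl
      · exact absurd hx hb
      · exact absurd hx hc
    have := Set.ncard_le_ncard h1 (Set.toFinite _)
    rw [Set.ncard_singleton] at this
    omega

/-- Alternation of the a-path edges at internal vertices. -/
lemma sub_Axor (hζ : IsXorSubtour q ζ) {i : ℕ} (h0 : 0 < i) (hi1 : i + 1 < q) :
    (ζ.Adj (⟨i, by omega⟩, ⟨0, by omega⟩) (⟨i + 1, hi1⟩, ⟨0, by omega⟩) ↔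
      ¬ ζ.Adj (⟨i, by omega⟩, ⟨0, by omega⟩) (⟨i - 1, by omega⟩, ⟨0, by omega⟩)) := by
  have hi : i < q := by omega
  have hnp : ¬ xorPortal q ((⟨i, hi⟩, ⟨0, by omega⟩) : XorV q) := by
    unfold xorPortal
    dsimp only
    omega
  have hcard : sdeg ζ (⟨i, hi⟩, ⟨0, by omega⟩) = 2 := hζ.2.2.2 _ hnp
  have hsub : ζ.neighborSet (⟨i, hi⟩, ⟨0, by omega⟩) ⊆
      (XorG q).neighborSet (⟨i, hi⟩, ⟨0, by omega⟩) := fun y hy => hζ.1 hy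
  rw [Gnbhd_a h0 hi1 hi] at hsub
  have hm : ((⟨i, hi⟩, ⟨2, by omega⟩) : XorV q) ∈ ζ.neighborSet (⟨i, hi⟩, ⟨0, by omega⟩) :=
    (sub_rung hζ hi).1.symm
  rw [sdeg] at hcard
  exact mem_xor_of_ncard_two hsub hm hcard
    (pair_ne_2 hi (by omega) (by omega) (by omega) (by omega))
    (pair_ne_2 hi (by omega) (by omega) (by omega) (by omega))
    (pair_ne_2 (by omega) (by omega) (by omega) (by omega) (by omega))

/-- Alternation of the b-path edges at internal vertices. -/
lemma sub_Bxor (hζ : IsXorSubtour q ζ) {i : ℕ} (h0 : 0 < i) (hi1 : i + 1 < q) :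
    (ζ.Adj (⟨i, by omega⟩, ⟨1, by omega⟩) (⟨i + 1, hi1⟩, ⟨1, by omega⟩) ↔
      ¬ ζ.Adj (⟨i, by omega⟩, ⟨1, by omega⟩) (⟨i - 1, by omega⟩, ⟨1, by omega⟩)) := by
  have hi : i < q := by omega
  have hnp : ¬ xorPortal q ((⟨i, hi⟩, ⟨1, by omega⟩) : XorV q) := by
    unfold xorPortal
    dsimp only
    omega
  have hcard : sdeg ζ (⟨i, hi⟩, ⟨1, by omega⟩) = 2 := hζ.2.2.2 _ hnp
  have hsub : ζ.neighborSet (⟨i, hi⟩, ⟨1, by omega⟩) ⊆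
      (XorG q).neighborSet (⟨i, hi⟩, ⟨1, by omega⟩) := fun y hy => hζ.1 hy
  rw [Gnbhd_b h0 hi1 hi] at hsub
  have hm : ((⟨i, hi⟩, ⟨2, by omega⟩) : XorV q) ∈ ζ.neighborSet (⟨i, hi⟩, ⟨1, by omega⟩) :=
    (sub_rung hζ hi).2.symm
  rw [sdeg] at hcard
  exact mem_xor_of_ncard_two hsub hm hcard
    (pair_ne_2 hi (by omega) (by omega) (by omega) (by omega))
    (pair_ne_2 hi (by omega) (by omega) (by omega) (by omega))
    (pair_ne_2 (by omega) (by omega) (by omega) (by omega) (by omega))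

/-- No subtour uses both path edges of the same slot (this would close a cycle). -/
lemma sub_noAB (hζ : IsXorSubtour q ζ) {i : ℕ} (hi1 : i + 1 < q) :
    ¬ (ζ.Adj (⟨i, by omega⟩, ⟨0, by omega⟩) (⟨i + 1, hi1⟩, ⟨0, by omega⟩) ∧
       ζ.Adj (⟨i, by omega⟩, ⟨1, by omega⟩) (⟨i + 1, hi1⟩, ⟨1, by omega⟩)) := by
  rintro ⟨hA, hB⟩
  have hi : i < q := by omega
  obtain ⟨hrm1, hrm2⟩ := sub_rung hζ hi
  obtain ⟨hrn1, hrn2⟩ := sub_rung hζ hi1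
  -- cycle: a_i → a_{i+1} → m_{i+1} → b_{i+1} → b_i → m_i → a_i
  have hcyc : (SimpleGraph.Walk.cons hA
      (SimpleGraph.Walk.cons hrn1.symm
        (SimpleGraph.Walk.cons hrn2
          (SimpleGraph.Walk.cons hB.symm
            (SimpleGraph.Walk.cons hrm2.symm
              (SimpleGraph.Walk.cons hrm1 SimpleGraph.Walk.nil)))))).IsCycle := by
    rw [SimpleGraph.Walk.isCycle_def]
    refine ⟨?_, by simp, ?_⟩
    · rw [SimpleGraph.Walk.isTrail_def]
      simp [Sym2.eq_iff, Prod.ext_iff, Fin.ext_iff]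
    · simp [Prod.ext_iff, Fin.ext_iff]
  exact hζ.2.1 _ hcyc

/-- The a-path edges are determined by the first one together with parity. -/
lemma sub_Aiff (hq : 3 ≤ q) (hζ : IsXorSubtour q ζ) :
    ∀ i (hi1 : i + 1 < q),
      (ζ.Adj (⟨i, by omega⟩, ⟨0, by omega⟩) (⟨i + 1, hi1⟩, ⟨0, by omega⟩) ↔
        (i % 2 = 0 ↔ ζ.Adj (⟨0, by omega⟩, ⟨0, by omega⟩) (⟨1, by omega⟩, ⟨0, by omega⟩))) := by
  intro i
  induction i with
  | zero => intro hi1; simp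
  | succ n ih =>
    intro hi1
    have hn1 : n + 1 < q := by omega
    have hx := sub_Axor hζ (i := n + 1) (by omega) hi1
    simp only [Nat.add_sub_cancel] at hx
    have hcomm : ζ.Adj (⟨n + 1, by omega⟩, ⟨0, by omega⟩) (⟨n, by omega⟩, ⟨0, by omega⟩) ↔
        ζ.Adj (⟨n, by omega⟩, ⟨0, by omega⟩) (⟨n + 1, hn1⟩, ⟨0, by omega⟩) :=
      SimpleGraph.adj_comm _ _ _
    rw [hx, hcomm, ih hn1]
    have hpar : ((n + 1) % 2 = 0) ↔ ¬ (n % 2 = 0) := by omega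
    rw [hpar]
    tauto

/-- The b-path edges are determined by the first one together with parity. -/
lemma sub_Biff (hq : 3 ≤ q) (hζ : IsXorSubtour q ζ) :
    ∀ i (hi1 : i + 1 < q),
      (ζ.Adj (⟨i, by omega⟩, ⟨1, by omega⟩) (⟨i + 1, hi1⟩, ⟨1, by omega⟩) ↔
        (i % 2 = 0 ↔ ζ.Adj (⟨0, by omega⟩, ⟨1, by omega⟩) (⟨1, by omega⟩, ⟨1, by omega⟩))) := by
  intro i
  induction i with
  | zero => intro hi1; simp
  | succ n ih =>
    intro hi1
    have hn1 : n + 1 < q := by omega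
    have hx := sub_Bxor hζ (i := n + 1) (by omega) hi1
    simp only [Nat.add_sub_cancel] at hx
    have hcomm : ζ.Adj (⟨n + 1, by omega⟩, ⟨1, by omega⟩) (⟨n, by omega⟩, ⟨1, by omega⟩) ↔
        ζ.Adj (⟨n, by omega⟩, ⟨1, by omega⟩) (⟨n + 1, hn1⟩, ⟨1, by omega⟩) :=
      SimpleGraph.adj_comm _ _ _
    rw [hx, hcomm, ih hn1]
    have hpar : ((n + 1) % 2 = 0) ↔ ¬ (n % 2 = 0) := by omega
    rw [hpar]
    tauto

/-- The first a-edge and the first b-edge cannot agree. -/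
lemma sub_B0_iff (hq : 3 ≤ q) (hζ : IsXorSubtour q ζ) :
    (ζ.Adj (⟨0, lt_of_lt_of_le (by norm_num) hq⟩, ⟨1, by omega⟩) (⟨1, by omega⟩, ⟨1, by omega⟩) ↔
      ¬ ζ.Adj (⟨0, lt_of_lt_of_le (by norm_num) hq⟩, ⟨0, by omega⟩) (⟨1, by omega⟩, ⟨0, by omega⟩)) := by
  have h01 : (0 : ℕ) + 1 < q := by omega
  have h12 : (1 : ℕ) + 1 < q := by omega
  constructor
  · intro hB hA
    exact sub_noAB hζ h01 ⟨hA, hB⟩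
  · intro hnA
    by_contra hnB
    have hA1 := (sub_Aiff hq hζ 1 h12).2 (by simpa using hnA)
    have hB1 := (sub_Biff hq hζ 1 h12).2 (by simpa using hnB)
    exact sub_noAB hζ h12 ⟨hA1, hB1⟩

/-- A subtour whose first a-edge status matches `p` is `zeta q p`. -/
lemma sub_eq_aux (hq : 3 ≤ q) (hζ : IsXorSubtour q ζ) (p : ℕ) (hp : p < 2)
    (hA : ζ.Adj (⟨0, by omega⟩, ⟨0, by omega⟩) (⟨1, by omega⟩, ⟨0, by omega⟩) ↔ p = 0) :
    ζ = zeta q p := by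
  have hAi : ∀ i (hi1 : i + 1 < q),
      (ζ.Adj (⟨i, by omega⟩, ⟨0, by omega⟩) (⟨i + 1, hi1⟩, ⟨0, by omega⟩) ↔ i % 2 = p) := by
    intro i hi1
    rw [sub_Aiff hq hζ i hi1, hA]
    omega
  have hBi : ∀ i (hi1 : i + 1 < q),
      (ζ.Adj (⟨i, by omega⟩, ⟨1, by omega⟩) (⟨i + 1, hi1⟩, ⟨1, by omega⟩) ↔ ¬ i % 2 = p) := by
    intro i hi1
    rw [sub_Biff hq hζ i hi1, sub_B0_iff hq hζ, hA]
    omega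
  ext ⟨⟨i, hi⟩, ⟨t, ht⟩⟩ ⟨⟨j, hj⟩, ⟨s, hs⟩⟩
  rw [zeta_adj']
  unfold zsym
  dsimp only
  constructor
  · intro h
    have hg := hζ.1 h
    rw [xorG_adj] at hg
    obtain ⟨hne, hc⟩ := hg
    unfold xorAdj at hc
    simp only [Fin.ext_iff] at hc
    rcases hc with hc | hc
    · rcases hc with ⟨ht0, hs0, hj0⟩ | ⟨ht0, hs0, hj0⟩ | ⟨ht0, hs0, hj0⟩ | ⟨ht0, hs0, hj0⟩
      · -- a-edge forward
        subst ht0; subst hs0; subst hj0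
        have hpar := (hAi i hj).1 h
        omega
      · -- b-edge forward
        subst ht0; subst hs0; subst hj0
        have hpar := (hBi i hj).1 h
        omega
      · omega
      · omega
    · rcases hc with ⟨hs0, ht0, hj0⟩ | ⟨hs0, ht0, hj0⟩ | ⟨hs0, ht0, hj0⟩ | ⟨hs0, ht0, hj0⟩
      · subst hs0; subst ht0; subst hj0
        have hpar := (hAi j hi).1 h.symm
        omega
      · subst hs0; subst ht0; subst hj0
        have hpar := (hBi j hi).1 h.symm
        omega
      · omega
      · omega
  · intro h
    rcases h with ⟨hij, hts⟩ | ⟨ht0, hs0, hcase⟩ | ⟨ht0, hs0, hcase⟩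
    · -- rung edges
      subst hij
      rcases hts with ⟨ht0, hs0⟩ | ⟨ht0, hs0⟩ | ⟨ht0, hs0⟩ | ⟨ht0, hs0⟩
      · subst ht0; subst hs0
        exact (sub_rung hζ hi).1.symm
      · subst ht0; subst hs0
        exact (sub_rung hζ hi).1
      · subst ht0; subst hs0
        exact (sub_rung hζ hi).2
      · subst ht0; subst hs0
        exact (sub_rung hζ hi).2.symm
    · -- a-edges
      subst ht0; subst hs0
      rcases hcase with ⟨hj0, hpar⟩ | ⟨hi0, hpar⟩
      · subst hj0
        exact (hAi i hj).2 hpar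
      · subst hi0
        exact ((hAi j hi).2 hpar).symm
    · -- b-edges
      subst ht0; subst hs0
      rcases hcase with ⟨hj0, hpar⟩ | ⟨hi0, hpar⟩
      · subst hj0
        exact (hBi i hj).2 hpar
      · subst hi0
        exact ((hBi j hi).2 hpar).symm

/-- Classification of subtours. -/
lemma sub_eq (hq : 3 ≤ q) (hζ : IsXorSubtour q ζ) : ζ = zeta q 0 ∨ ζ = zeta q 1 := by
  have h01 : (0 : ℕ) + 1 < q := by omega
  by_cases hA : ζ.Adj (⟨0, by omega⟩, ⟨0, by omega⟩) (⟨1, by omega⟩, ⟨0, by omega⟩)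
  case pos => exact Or.inl (sub_eq_aux hq hζ 0 (by omega) (by simpa using hA))
  case neg => exact Or.inr (sub_eq_aux hq hζ 1 (by omega) (by simpa using hA))

end unique

/-! #### The symmetric difference -/

section symmdiff

variable {q : ℕ}

/-- enumeration of the symmetric-difference edges -/
def sdFun (q : ℕ) (x : Fin (q - 1) × Fin 2) : Sym2 (XorV q) :=
  s(((⟨x.1.val, by have := x.1.isLt; omega⟩ : Fin q),
     (⟨x.2.val, by have := x.2.isLt; omega⟩ : Fin 3)),
    ((⟨x.1.val + 1, by have := x.1.isLt; omega⟩ : Fin q),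
     (⟨x.2.val, by have := x.2.isLt; omega⟩ : Fin 3)))

lemma symmdiff_card (hq : 3 ≤ q) :
    (symmDiff (zeta q 1).edgeSet (zeta q 0).edgeSet).ncard = 2 * q - 2 := by
  classical
  have finj : Function.Injective (sdFun q) := by
    rintro ⟨⟨k, hk⟩, ⟨r, hr⟩⟩ ⟨⟨k', hk'⟩, ⟨r', hr'⟩⟩ h
    simp [sdFun, Sym2.eq_iff, Prod.ext_iff, Fin.ext_iff] at h
    simp only [Prod.ext_iff, Fin.ext_iff]
    omega
  have himg : symmDiff (zeta q 1).edgeSet (zeta q 0).edgeSet =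
      ↑(Finset.image (sdFun q) Finset.univ) := by
    ext e
    induction e with
    | _ x y =>
      obtain ⟨⟨i, hi⟩, ⟨t, ht⟩⟩ := x
      obtain ⟨⟨j, hj⟩, ⟨s, hs⟩⟩ := y
      simp only [Finset.coe_image, Finset.coe_univ, Set.image_univ, Set.mem_range]
      constructor
      · intro h
        rw [Set.mem_symmDiff] at h
        have key : t = s ∧ (t = 0 ∨ t = 1) ∧ (j = i + 1 ∨ i = j + 1) := by
          rcases h with ⟨h1, h2⟩ | ⟨h1, h2⟩ <;>
          · rw [SimpleGraph.mem_edgeSet, zeta_adj'] at h1 h2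
            unfold zsym at h1 h2
            dsimp only at h1 h2
            rcases h1 with ⟨hij, hts⟩ | ⟨ht0, hs0, hcase⟩ | ⟨ht0, hs0, hcase⟩
            · exact absurd (Or.inl ⟨hij, hts⟩) h2
            · omega
            · omega
        obtain ⟨rfl, htv, hor⟩ := key
        rcases hor with hor | hor
        · refine ⟨(⟨i, by omega⟩, ⟨t, by omega⟩), ?_⟩
          simp [sdFun, Sym2.eq_iff, Prod.ext_iff, Fin.ext_iff]
          omega
        · refine ⟨(⟨j, by omega⟩, ⟨t, by omega⟩), ?_⟩
          simp [sdFun, Sym2.eq_iff, Prod.ext_iff, Fin.ext_iff]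
          omega
      · rintro ⟨⟨⟨k, hk⟩, ⟨r, hr⟩⟩, hz⟩
        simp [sdFun, Sym2.eq_iff, Prod.ext_iff, Fin.ext_iff] at hz
        rw [Set.mem_symmDiff]
        simp only [SimpleGraph.mem_edgeSet, zeta_adj']
        unfold zsym
        dsimp only
        by_cases hside : (r = 0 ∧ k % 2 = 0) ∨ (r = 1 ∧ ¬ k % 2 = 0)
        · right
          exact ⟨by omega, by omega⟩
        · left
          exact ⟨by omega, by omega⟩
  rw [himg, Set.ncard_coe_finset, Finset.card_image_of_injective _ finj,
    Finset.card_univ]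
  simp only [Fintype.card_prod, Fintype.card_fin]
  omega

end symmdiff

end XorPf

/-! ### Main theorem -/

theorem xorGadget_two_subtours (q : ℕ) (hq : 3 ≤ q) :
    ∃ ζodd ζeven : SimpleGraph (XorV q),
      ζodd ≠ ζeven ∧ IsXorSubtour q ζodd ∧ IsXorSubtour q ζeven ∧
      (∀ ζ, IsXorSubtour q ζ → ζ = ζodd ∨ ζ = ζeven) ∧
      -- the odd subtour is a Hamiltonian path between the portals of the 1-side
      IsHamPathBetween q ζodd ((⟨0, by omega⟩ : Fin q), 0)
        (if Even q then ((⟨q - 1, by omega⟩ : Fin q), 0)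
         else ((⟨q - 1, by omega⟩ : Fin q), 1)) ∧
      -- the even subtour is a Hamiltonian path between the portals of the 2-side
      IsHamPathBetween q ζeven ((⟨0, by omega⟩ : Fin q), 1)
        (if Even q then ((⟨q - 1, by omega⟩ : Fin q), 1)
         else ((⟨q - 1, by omega⟩ : Fin q), 0)) ∧
      (symmDiff ζodd.edgeSet ζeven.edgeSet).ncard = 2 * q - 2 := by
  refine ⟨XorPf.zeta q 1, XorPf.zeta q 0, ?_, ?_, ?_, ?_, ?_, ?_, ?_⟩
  · -- the two subtours are distinct
    intro heq
    have h1 : (XorPf.zeta q 0).Adj (⟨0, by omega⟩, ⟨0, by omega⟩)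
        (⟨1, by omega⟩, ⟨0, by omega⟩) := XorPf.adjAA (by omega) (by omega) (by omega)
    have h2 : ¬ (XorPf.zeta q 1).Adj (⟨0, by omega⟩, ⟨0, by omega⟩)
        (⟨1, by omega⟩, ⟨0, by omega⟩) := by
      rw [XorPf.zeta_adj']
      unfold XorPf.zsym
      dsimp only
      omega
    rw [← heq] at h1
    exact h2 h1
  · exact XorPf.zeta_isXorSubtour (by omega) hq
  · exact XorPf.zeta_isXorSubtour (by omega) hq
  · intro ζ hζ
    rcases XorPf.sub_eq hq hζ with h | h
    · exact Or.inr h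
    · exact Or.inl h
  · -- odd Hamiltonian path
    rcases Nat.even_or_odd q with he | ho
    · rw [if_pos he]
      rw [Nat.even_iff] at he
      exact XorPf.hampath_zeta (p := 1) (by omega) hq (e2 := 0) (by omega)
        (Or.inl (by omega))
    · rw [if_neg (by rw [Nat.even_iff]; rw [Nat.odd_iff] at ho; omega)]
      rw [Nat.odd_iff] at ho
      exact XorPf.hampath_zeta (p := 1) (by omega) hq (e2 := 1) (by omega)
        (Or.inr (by omega))
  · -- even Hamiltonian path
    rcases Nat.even_or_odd q with he | ho
    · rw [if_pos he]
      rw [Nat.even_iff] at he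
      exact XorPf.hampath_zeta (p := 0) (by omega) hq (e2 := 1) (by omega)
        (Or.inr (by omega))
    · rw [if_neg (by rw [Nat.even_iff]; rw [Nat.odd_iff] at ho; omega)]
      rw [Nat.odd_iff] at ho
      exact XorPf.hampath_zeta (p := 0) (by omega) hq (e2 := 0) (by omega)
        (Or.inl (by omega))
  · exact XorPf.symmdiff_card hq
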